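/- Let S ⊆ A* be a recognizable set. If S is completely reducible over ℚ, then the eventual kernel and the eventual range of S intersect trivially: EK(S) ∩ ER(S) = {0}. -/

import Mathlib

namespace Birec

variable {A : Type*}

/-- The left quotient `u⁻¹S = {v | u v ∈ S}`. -/
def leftQuot (S : Set (List A)) (u : List A) : Set (List A) := {v | u ++ v ∈ S}

/-- A language is recognizable iff it has finitely many left quotients (Nerode). -/
def Recognizable (S : Set (List A)) : Prop := (Set.range (leftQuot S)).Finite

/-- The reversal `S̃` of a language. -/
def langRev (S : Set (List A)) : Set (List A) := {w | w.reverse ∈ S}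

/-- A recognizable set is recurrent if its minimal automaton (whose states are the
nonempty left quotients) is strongly connected. -/
def Recurrent (S : Set (List A)) : Prop :=
  Recognizable S ∧
    ∀ u v : List A, (leftQuot S u).Nonempty → (leftQuot S v).Nonempty →
      ∃ w : List A, leftQuot S (u ++ w) = leftQuot S v

/-- A set is birecurrent if it is recurrent together with its reversal. -/
def Birecurrent (S : Set (List A)) : Prop := Recurrent S ∧ Recurrent (langRev S)

/-- A set is dense if every word is a factor of one of its words. -/
def LangDense (S : Set (List A)) : Prop := ∀ v : List A, ∃ u w : List A, u ++ v ++ w ∈ S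

end Birec
namespace Birec

variable {A : Type*}

/-- The characteristic series of a language, as a function `A* → ℚ`. -/
noncomputable def charFun (S : Set (List A)) : List A → ℚ := S.indicator 1

/-- The shift operator `τ ↦ τ · u`, where `(τ · u)(v) = τ(u v)`; this is the linear
action underlying the syntactic representation. -/
def shiftOp (u : List A) : (List A → ℚ) →ₗ[ℚ] (List A → ℚ) where
  toFun τ := fun v => τ (u ++ v)
  map_add' := fun _ _ => rfl
  map_smul' := fun _ _ => rfl

/-- The syntactic space of a series `σ`: the subspace of `ℚ⟨⟨A⟩⟩` spanned by the
series `σ · u` for `u ∈ A*`. -/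
def synSpace (σ : List A → ℚ) : Submodule ℚ (List A → ℚ) :=
  Submodule.span ℚ (Set.range fun u : List A => shiftOp u σ)

/-- A subspace is invariant if it is stable under all shift operators. -/
def InvariantSub (W : Submodule ℚ (List A → ℚ)) : Prop :=
  ∀ τ ∈ W, ∀ u : List A, shiftOp u τ ∈ W

/-- An invariant subspace is irreducible if it is nonzero and has no nontrivial
invariant subspace. -/
def IrreducibleSub (W : Submodule ℚ (List A → ℚ)) : Prop :=
  W ≠ ⊥ ∧ ∀ W' : Submodule ℚ (List A → ℚ), W' ≤ W → InvariantSub W' → W' = ⊥ ∨ W' = W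

/-- A series is completely reducible if its syntactic space is a direct sum of
invariant irreducible subspaces (equivalently, its syntactic representation is a
direct sum of irreducible representations). -/
def CompletelyReducibleSeries (σ : List A → ℚ) : Prop :=
  ∃ (n : ℕ) (W : Fin n → Submodule ℚ (List A → ℚ)),
    (∀ i, W i ≤ synSpace σ ∧ InvariantSub (W i) ∧ IrreducibleSub (W i)) ∧
    iSupIndep W ∧ (⨆ i, W i) = synSpace σ

/-- A language is completely reducible if its characteristic series is. -/
noncomputable def CompletelyReducibleLang (S : Set (List A)) : Prop :=
  CompletelyReducibleSeries (charFun S)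

/-- The rank of the element `ψ_σ(u)` of the syntactic monoid, i.e. the dimension of the
image of the syntactic space under the shift by `u`. -/
noncomputable def psiRank (σ : List A → ℚ) (u : List A) : ℕ :=
  Module.finrank ℚ ↥(Submodule.map (shiftOp u) (synSpace σ))

/-- `u` induces an element of minimal nonzero rank of the syntactic monoid. -/
def IsMinNonzeroPsiRank (σ : List A → ℚ) (u : List A) : Prop :=
  psiRank σ u ≠ 0 ∧ ∀ v : List A, psiRank σ v ≠ 0 → psiRank σ u ≤ psiRank σ v

/-- The eventual kernel `EK(S)`: the intersection (inside the syntactic space) of the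
kernels of all elements of minimal nonzero rank of the syntactic monoid. -/
noncomputable def EK (S : Set (List A)) : Submodule ℚ (List A → ℚ) :=
  synSpace (charFun S) ⊓
    ⨅ u ∈ {u : List A | IsMinNonzeroPsiRank (charFun S) u}, LinearMap.ker (shiftOp u)

/-- The eventual range `ER(S)`: the subspace spanned by the images of all elements of
minimal nonzero rank of the syntactic monoid. -/
noncomputable def ER (S : Set (List A)) : Submodule ℚ (List A → ℚ) :=
  ⨆ u ∈ {u : List A | IsMinNonzeroPsiRank (charFun S) u},
    Submodule.map (shiftOp u) (synSpace (charFun S))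

end Birec

namespace Birec

variable {A : Type*}

lemma shiftOp_apply (u : List A) (τ : List A → ℚ) (v : List A) :
    shiftOp u τ v = τ (u ++ v) := rfl

lemma shiftOp_shiftOp (u v : List A) (τ : List A → ℚ) :
    shiftOp v (shiftOp u τ) = shiftOp (u ++ v) τ := by
  funext w
  simp only [shiftOp_apply, List.append_assoc]

/-- The anti-representation of the free monoid by shift operators (words reversed to
make it a genuine monoid morphism). -/
def phi (A : Type*) : FreeMonoid A →* Module.End ℚ (List A → ℚ) where
  toFun w := shiftOp (FreeMonoid.toList w).reverse
  map_one' := rfl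
  map_mul' w₁ w₂ := by
    apply LinearMap.ext; intro τ
    show shiftOp (FreeMonoid.toList (w₁ * w₂)).reverse τ =
      shiftOp (FreeMonoid.toList w₁).reverse (shiftOp (FreeMonoid.toList w₂).reverse τ)
    rw [shiftOp_shiftOp, FreeMonoid.toList_mul, List.reverse_append]

/-- The induced algebra morphism from the monoid algebra. -/
noncomputable def Phi (A : Type*) :
    MonoidAlgebra ℚ (FreeMonoid A) →ₐ[ℚ] Module.End ℚ (List A → ℚ) :=
  MonoidAlgebra.lift ℚ _ (FreeMonoid A) (phi A)

noncomputable instance : Module (MonoidAlgebra ℚ (FreeMonoid A)) (List A → ℚ) :=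
  Module.compHom _ (Phi A).toRingHom

lemma R_smul_def (r : MonoidAlgebra ℚ (FreeMonoid A)) (x : List A → ℚ) :
    r • x = Phi A r x := rfl

instance : IsScalarTower ℚ (MonoidAlgebra ℚ (FreeMonoid A)) (List A → ℚ) :=
  ⟨fun c r x => by
    rw [R_smul_def, R_smul_def, map_smul, LinearMap.smul_apply]⟩

lemma shiftOp_eq_smul (u : List A) (x : List A → ℚ) :
    shiftOp u x =
      (MonoidAlgebra.single (FreeMonoid.ofList u.reverse) (1 : ℚ) :
        MonoidAlgebra ℚ (FreeMonoid A)) • x := by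
  rw [R_smul_def]
  show shiftOp u x = Phi A (MonoidAlgebra.single (FreeMonoid.ofList u.reverse) (1 : ℚ)) x
  rw [Phi, MonoidAlgebra.lift_single, one_smul]
  show shiftOp u x = shiftOp (FreeMonoid.toList (FreeMonoid.ofList u.reverse)).reverse x
  rw [FreeMonoid.toList_ofList, List.reverse_reverse]

/-- Upgrade an invariant `ℚ`-subspace to a submodule over the monoid algebra. -/
def toRSub (W : Submodule ℚ (List A → ℚ)) (hW : InvariantSub W) :
    Submodule (MonoidAlgebra ℚ (FreeMonoid A)) (List A → ℚ) where
  carrier := W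
  add_mem' h₁ h₂ := W.add_mem h₁ h₂
  zero_mem' := W.zero_mem
  smul_mem' := by
    intro r x hx
    show Phi A r x ∈ W
    induction r using MonoidAlgebra.induction_on with
    | of w =>
      have h : Phi A (MonoidAlgebra.of ℚ (FreeMonoid A) w) = phi A w :=
        MonoidAlgebra.lift_of (phi A) w
      rw [h]
      exact hW x hx _
    | add f g hf hg =>
      rw [map_add, LinearMap.add_apply]
      exact W.add_mem hf hg
    | smul c f hf =>
      rw [map_smul, LinearMap.smul_apply]
      exact W.smul_mem c hf

lemma mem_toRSub {W : Submodule ℚ (List A → ℚ)} {hW : InvariantSub W} {x : List A → ℚ} :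
    x ∈ toRSub W hW ↔ x ∈ W := Iff.rfl

lemma restrictScalars_toRSub (W : Submodule ℚ (List A → ℚ)) (hW : InvariantSub W) :
    (toRSub W hW).restrictScalars ℚ = W := rfl

lemma invariant_restrictScalars
    (P : Submodule (MonoidAlgebra ℚ (FreeMonoid A)) (List A → ℚ)) :
    InvariantSub (P.restrictScalars ℚ) := by
  intro τ hτ u
  show shiftOp u τ ∈ P
  rw [shiftOp_eq_smul]
  exact P.smul_mem _ hτ

lemma isSimple_toRSub (W : Submodule ℚ (List A → ℚ)) (hinv : InvariantSub W)
    (hirr : IrreducibleSub W) :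
    IsSimpleModule (MonoidAlgebra ℚ (FreeMonoid A)) ↥(toRSub W hinv) := by
  have hPbot : toRSub W hinv ≠ ⊥ := by
    intro h
    apply hirr.1
    rw [← restrictScalars_toRSub W hinv, h, Submodule.restrictScalars_bot]
  haveI : Nontrivial ↥(toRSub W hinv) := Submodule.nontrivial_iff_ne_bot.mpr hPbot
  set P := toRSub W hinv with hPdef
  rw [isSimpleModule_iff]
  refine ⟨?_⟩
  intro Q
  have hinj := Submodule.map_injective_of_injective P.injective_subtype
  have hQle : Q.map P.subtype ≤ P := by
    rintro x ⟨y, _, rfl⟩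
    exact y.2
  rcases hirr.2 ((Q.map P.subtype).restrictScalars ℚ)
      (by rw [← restrictScalars_toRSub W hinv]; exact hQle)
      (invariant_restrictScalars _) with h | h
  · left
    have hbot : (Q.map P.subtype).restrictScalars ℚ =
        Submodule.restrictScalars ℚ (⊥ : Submodule (MonoidAlgebra ℚ (FreeMonoid A)) _) := by
      rw [h, Submodule.restrictScalars_bot]
    have h2 := Submodule.restrictScalars_injective ℚ _ _ hbot
    exact hinj (by rw [Submodule.map_bot]; exact h2)
  · right
    have htop : (Q.map P.subtype).restrictScalars ℚ = Submodule.restrictScalars ℚ P := by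
      rw [h]; rfl
    have h2 := Submodule.restrictScalars_injective ℚ _ _ htop
    exact hinj (by rw [Submodule.map_subtype_top]; exact h2)

lemma shiftOp_charFun (S : Set (List A)) (u : List A) :
    shiftOp u (charFun S) = (leftQuot S u).indicator 1 := rfl

lemma finiteDimensional_synSpace {S : Set (List A)} (hrec : Recognizable S) :
    FiniteDimensional ℚ ↥(synSpace (charFun S)) := by
  apply FiniteDimensional.span_of_finite
  have hsub : (Set.range fun u : List A => shiftOp u (charFun S)) ⊆
      (fun Q : Set (List A) => Q.indicator (1 : List A → ℚ)) '' Set.range (leftQuot S) := by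
    rintro _ ⟨u, rfl⟩
    exact ⟨leftQuot S u, ⟨u, rfl⟩, (shiftOp_charFun S u).symm⟩
  exact (hrec.image _).subset hsub

lemma invariant_synSpace (σ : List A → ℚ) : InvariantSub (synSpace σ) := by
  intro τ hτ u
  induction hτ using Submodule.span_induction with
  | mem x hx =>
    obtain ⟨w, rfl⟩ := hx
    rw [shiftOp_shiftOp]
    exact Submodule.subset_span ⟨w ++ u, rfl⟩
  | zero => rw [map_zero]; exact Submodule.zero_mem _
  | add x y _ _ hx hy => rw [map_add]; exact Submodule.add_mem _ hx hy
  | smul c x _ hx => rw [map_smul]; exact Submodule.smul_mem _ _ hx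

lemma shiftOp_eq_zero_of_psiRank_zero {σ : List A → ℚ}
    (hfd : FiniteDimensional ℚ ↥(synSpace σ)) {u : List A} (h : psiRank σ u = 0)
    {x : List A → ℚ} (hx : x ∈ synSpace σ) : shiftOp u x = 0 := by
  have hbot : Submodule.map (shiftOp u) (synSpace σ) = ⊥ :=
    Submodule.finrank_eq_zero.mp h
  have : shiftOp u x ∈ Submodule.map (shiftOp u) (synSpace σ) :=
    Submodule.mem_map_of_mem hx
  rw [hbot] at this
  exact this

lemma map_shiftOp_le (σ : List A → ℚ) (w : List A) :
    Submodule.map (shiftOp w) (synSpace σ) ≤ synSpace σ := by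
  rintro _ ⟨y, hy, rfl⟩
  exact invariant_synSpace σ y hy w

lemma map_shiftOp_append (σ : List A → ℚ) (u v : List A) :
    Submodule.map (shiftOp (u ++ v)) (synSpace σ) =
      Submodule.map (shiftOp v) (Submodule.map (shiftOp u) (synSpace σ)) := by
  rw [← Submodule.map_comp]
  congr 1
  apply LinearMap.ext; intro τ
  exact (shiftOp_shiftOp u v τ).symm

lemma psiRank_append_le_right {σ : List A → ℚ}
    (hfd : FiniteDimensional ℚ ↥(synSpace σ)) (w u : List A) :
    psiRank σ (w ++ u) ≤ psiRank σ u := by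
  unfold psiRank
  rw [map_shiftOp_append]
  exact Submodule.finrank_mono (Submodule.map_mono (map_shiftOp_le σ w))

lemma psiRank_append_le_left {σ : List A → ℚ}
    (hfd : FiniteDimensional ℚ ↥(synSpace σ)) (u w : List A) :
    psiRank σ (u ++ w) ≤ psiRank σ u := by
  unfold psiRank
  rw [map_shiftOp_append]
  exact Submodule.finrank_map_le _ _

lemma mem_EK {S : Set (List A)} {τ : List A → ℚ} :
    τ ∈ EK S ↔ τ ∈ synSpace (charFun S) ∧
      ∀ u : List A, IsMinNonzeroPsiRank (charFun S) u → shiftOp u τ = 0 := by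
  simp [EK, Submodule.mem_inf, Submodule.mem_iInf, LinearMap.mem_ker, Set.mem_setOf_eq]

lemma invariant_EK (S : Set (List A)) (hrec : Recognizable S) : InvariantSub (EK S) := by
  haveI hfd := finiteDimensional_synSpace hrec
  intro τ hτ w
  rw [mem_EK] at hτ ⊢
  obtain ⟨hτV, hker⟩ := hτ
  refine ⟨invariant_synSpace _ τ hτV w, fun u hu => ?_⟩
  rw [shiftOp_shiftOp]
  by_cases h0 : psiRank (charFun S) (w ++ u) = 0
  · exact shiftOp_eq_zero_of_psiRank_zero hfd h0 hτV
  · exact hker (w ++ u)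
      ⟨h0, fun v hv => le_trans (psiRank_append_le_right hfd w u) (hu.2 v hv)⟩

lemma invariant_ER (S : Set (List A)) (hrec : Recognizable S) : InvariantSub (ER S) := by
  haveI hfd := finiteDimensional_synSpace hrec
  intro τ hτ w
  have hle : ER S ≤ Submodule.comap (shiftOp w) (ER S) := by
    refine iSup₂_le fun u hu => ?_
    rintro _ ⟨y, hy, rfl⟩
    show shiftOp w (shiftOp u y) ∈ ER S
    rw [shiftOp_shiftOp]
    by_cases h0 : psiRank (charFun S) (u ++ w) = 0
    · rw [shiftOp_eq_zero_of_psiRank_zero hfd h0 hy]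
      exact Submodule.zero_mem _
    · have hmin : IsMinNonzeroPsiRank (charFun S) (u ++ w) :=
        ⟨h0, fun v hv => le_trans (psiRank_append_le_left hfd u w) (hu.2 v hv)⟩
      exact le_iSup₂ (f := fun u (_ : u ∈ {u : List A | IsMinNonzeroPsiRank (charFun S) u}) =>
          Submodule.map (shiftOp u) (synSpace (charFun S))) (u ++ w) hmin
        (Submodule.mem_map_of_mem hy)
  exact hle hτ

end Birec

open Birec

set_option maxHeartbeats 1000000 in
set_option synthInstance.maxHeartbeats 400000 in
/-- **Proposition.** Let `S` be a recognizable set.  If `S` is completely reducible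
over `ℚ`, then the eventual kernel and the eventual range of `S` intersect trivially:
`EK(S) ∩ ER(S) = {0}`. -/
theorem ek_inf_er_eq_bot {A : Type*} [Fintype A] (S : Set (List A))
    (hrec : Recognizable S) (hcr : CompletelyReducibleLang S) :
    EK S ⊓ ER S = ⊥ := by
  classical
  haveI hfd : FiniteDimensional ℚ ↥(synSpace (charFun S)) := finiteDimensional_synSpace hrec
  obtain ⟨n, W, hW, hindep, hsup⟩ := hcr
  have hVinv : InvariantSub (synSpace (charFun S)) := invariant_synSpace _
  set R := MonoidAlgebra ℚ (FreeMonoid A) with hR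
  set V' : Submodule R (List A → ℚ) := toRSub (synSpace (charFun S)) hVinv with hV'
  set P : Fin n → Submodule R (List A → ℚ) := fun i => toRSub (W i) (hW i).2.1 with hP
  have hPsimple : ∀ i, IsSimpleModule R ↥(P i) := fun i =>
    isSimple_toRSub _ _ (hW i).2.2
  have hPV : (⨆ i ∈ Set.univ, P i) = V' := by
    apply le_antisymm
    · exact iSup₂_le fun i _ x hx => (hW i).1 hx
    · intro x hx
      have hx' : x ∈ (⨆ i, W i : Submodule ℚ (List A → ℚ)) := by rw [hsup]; exact hx
      have hle : (⨆ i, W i : Submodule ℚ (List A → ℚ)) ≤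
          (⨆ i ∈ Set.univ, P i).restrictScalars ℚ := by
        refine iSup_le fun i y hy => ?_
        have : P i ≤ ⨆ i ∈ Set.univ, P i :=
          le_iSup₂ (f := fun i (_ : i ∈ Set.univ) => P i) i trivial
        exact this hy
      exact hle hx'
  haveI hss : IsSemisimpleModule R ↥V' := by
    have := isSemisimpleModule_biSup_of_isSemisimpleModule_submodule
      (s := Set.univ) (p := P) (fun i _ => letI := hPsimple i; inferInstance)
    rwa [hPV] at this
  have hEKV : EK S ≤ synSpace (charFun S) := inf_le_left
  have hYinv : InvariantSub (EK S ⊓ ER S) := fun τ hτ u =>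
    Submodule.mem_inf.mpr
      ⟨invariant_EK S hrec τ (Submodule.mem_inf.mp hτ).1 u,
       invariant_ER S hrec τ (Submodule.mem_inf.mp hτ).2 u⟩
  set YR : Submodule R (List A → ℚ) := toRSub (EK S ⊓ ER S) hYinv with hYR
  set Y' : Submodule R ↥V' := YR.comap V'.subtype with hY'
  obtain ⟨X', hX'⟩ := exists_isCompl Y'
  set p := Submodule.linearProjOfIsCompl Y' X' hX' with hp
  -- the projection kills every element of `ER S` inside `V'`
  have key : ∀ z : ↥V', (z : List A → ℚ) ∈ ER S → p z = 0 := by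
    have hER : ER S ≤
        { carrier := {x : List A → ℚ | ∃ hx : x ∈ V', p ⟨x, hx⟩ = 0}
          add_mem' := by
            rintro a b ⟨ha, hpa⟩ ⟨hb, hpb⟩
            refine ⟨V'.add_mem ha hb, ?_⟩
            have : (⟨a + b, V'.add_mem ha hb⟩ : ↥V') = ⟨a, ha⟩ + ⟨b, hb⟩ := rfl
            rw [this, map_add, hpa, hpb, add_zero]
          zero_mem' := by
            refine ⟨V'.zero_mem, ?_⟩
            have : (⟨(0 : List A → ℚ), V'.zero_mem⟩ : ↥V') = 0 := rfl
            rw [this, map_zero]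
          smul_mem' := by
            rintro c x ⟨hx, hpx⟩
            have hcx : c • x = (algebraMap ℚ R c) • x := (algebraMap_smul R c x).symm
            have hmem : c • x ∈ V' := by
              rw [hcx]; exact V'.smul_mem _ hx
            refine ⟨hmem, ?_⟩
            have : (⟨c • x, hmem⟩ : ↥V') = (algebraMap ℚ R c) • ⟨x, hx⟩ :=
              Subtype.ext hcx
            rw [this, map_smul, hpx, smul_zero] } := by
      refine iSup₂_le fun u hu => ?_
      rintro _ ⟨y, hy, rfl⟩
      have hyV : y ∈ V' := hy
      have hmem : shiftOp u y ∈ V' := hVinv y hy u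
      refine ⟨hmem, ?_⟩
      set r : R := MonoidAlgebra.single (FreeMonoid.ofList u.reverse) (1 : ℚ) with hr
      have h1 : (⟨shiftOp u y, hmem⟩ : ↥V') = r • ⟨y, hyV⟩ :=
        Subtype.ext (shiftOp_eq_smul u y)
      rw [h1, map_smul]
      -- now `p ⟨y, hyV⟩` lies in `Y'`, whose elements are killed by `shiftOp u`
      set q : ↥Y' := p ⟨y, hyV⟩ with hq
      have hqEK : ((q : ↥V') : List A → ℚ) ∈ EK S :=
        (Submodule.mem_inf.mp (q.2 : ((q : ↥V') : List A → ℚ) ∈ YR)).1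
      have hzero : shiftOp u ((q : ↥V') : List A → ℚ) = 0 :=
        (mem_EK.mp hqEK).2 u hu
      have : ((r • q : ↥Y') : ↥V') = r • (q : ↥V') := rfl
      have hcoe : (((r • q : ↥Y') : ↥V') : List A → ℚ) =
          r • ((q : ↥V') : List A → ℚ) := rfl
      have : (r • q : ↥Y') = 0 := by
        apply Subtype.ext
        apply Subtype.ext
        show (((r • q : ↥Y') : ↥V') : List A → ℚ) = 0
        rw [hcoe, ← shiftOp_eq_smul, hzero]
      exact this
    intro z hz
    obtain ⟨hx, hpx⟩ := hER hz
    have : (⟨(z : List A → ℚ), hx⟩ : ↥V') = z := Subtype.ext rfl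
    rwa [this] at hpx
  -- conclude
  rw [eq_bot_iff]
  intro τ hτ
  have hτEK : τ ∈ EK S := (Submodule.mem_inf.mp hτ).1
  have hτER : τ ∈ ER S := (Submodule.mem_inf.mp hτ).2
  have hτV : τ ∈ V' := hEKV hτEK
  have ht : (⟨τ, hτV⟩ : ↥V') ∈ Y' := hτ
  have h1 : p ⟨τ, hτV⟩ = ⟨⟨τ, hτV⟩, ht⟩ :=
    Submodule.linearProjOfIsCompl_apply_left hX' ⟨⟨τ, hτV⟩, ht⟩
  have h2 : p ⟨τ, hτV⟩ = 0 := key ⟨τ, hτV⟩ hτER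
  have h3 : (⟨⟨τ, hτV⟩, ht⟩ : ↥Y') = 0 := by rw [← h1, h2]
  have h4 := congrArg (fun y : ↥Y' => ((y : ↥V') : List A → ℚ)) h3
  simpa using h4
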